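/- Let D be the derivation on ℚ(a,x,u,v,z) with D(a) = axv, D(x) = xvz, D(z) = vz², D(v) = uv²z, D(u) = u²vz. Then for every n ≥ 2, D^{n-2}(av) = ((u-1)/(xu))·D^{n-1}(a) + (v/u)·(1 + (n-2)·z/x)·D^{n-2}(a). -/

import Mathlib

/-- For the derivation with D(a)=axv, D(x)=xvz, D(z)=vz², D(v)=uv²z, D(u)=u²vz
on ℚ(a,x,u,v,z), for every n ≥ 2:
D^{n-2}(av) = ((u-1)/(xu))·D^{n-1}(a) + (v/u)·(1 + (n-2)·z/x)·D^{n-2}(a). -/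
theorem deriv_iterate_av_recurrence {K : Type*} [Field K] [Algebra ℚ K]
    (D : Derivation ℚ K K) (a x u v z : K)
    (ha : a ≠ 0) (hx : x ≠ 0) (hu : u ≠ 0) (hv : v ≠ 0) (hz : z ≠ 0)
    (hDa : D a = a * x * v) (hDx : D x = x * v * z) (hDz : D z = v * z ^ 2)
    (hDv : D v = u * v ^ 2 * z) (hDu : D u = u ^ 2 * v * z) :
    ∀ n : ℕ, 2 ≤ n →
      (⇑D)^[n - 2] (a * v)
        = (u - 1) / (x * u) * (⇑D)^[n - 1] a
          + v / u * (1 + ((n : K) - 2) * z / x) * (⇑D)^[n - 2] a := by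
  have h1 : D (v / u) = 0 := by
    rw [Derivation.leibniz_div, hDv, hDu]
    simp only [smul_eq_mul]
    field_simp
    ring
  have h2 : D (z / x) = 0 := by
    rw [Derivation.leibniz_div, hDz, hDx]
    simp only [smul_eq_mul]
    field_simp
    ring
  have h3 : D ((u - 1) / (x * u)) = v / u * (z / x) := by
    rw [Derivation.leibniz_div]
    simp only [smul_eq_mul, map_sub, Derivation.map_one_eq_zero, Derivation.leibniz,
      smul_eq_mul, sub_zero]
    rw [hDu, hDx]
    field_simp
    ring
  have key : ∀ m : ℕ, (⇑D)^[m] (a * v)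
      = (u - 1) / (x * u) * (⇑D)^[m + 1] a
        + v / u * (1 + (m : K) * z / x) * (⇑D)^[m] a := by
    intro m
    induction m with
    | zero =>
      simp only [Function.iterate_zero_apply, Function.iterate_one, Nat.cast_zero,
        zero_mul, zero_div, add_zero, Nat.zero_add]
      rw [hDa]
      field_simp
      ring
    | succ m ih =>
      have hc2 : D (v / u * (1 + (m : K) * z / x)) = 0 := by
        have : v / u * (1 + (m : K) * z / x) = v / u + (m : K) * (v / u * (z / x)) := by
          field_simp
        rw [this, map_add, h1, Derivation.leibniz, Derivation.leibniz, h1, h2]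
        simp
      rw [Function.iterate_succ_apply', ih, map_add, Derivation.leibniz,
        Derivation.leibniz, h3, hc2]
      simp only [smul_eq_mul, smul_zero, mul_zero, zero_mul, add_zero, zero_add]
      rw [← Function.iterate_succ_apply' D (m + 1) a, ← Function.iterate_succ_apply' D m a]
      push_cast
      field_simp
      ring
  intro n hn
  obtain ⟨m, rfl⟩ : ∃ m, n = m + 2 := ⟨n - 2, by omega⟩
  have e1 : m + 2 - 2 = m := by omega
  have e2 : m + 2 - 1 = m + 1 := by omega
  rw [e1, e2]
  have := key m
  push_cast
  convert this using 4
  ring
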